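/- Let Q₀ be the set of Hermitian (2ν+K)×(2ν+K) matrices M such that there exists a Hermitian ν×ν matrix X (not necessarily positive semidefinite) with M ⪰ [[0,X,0],[X,0,0],[0,0,0]]. Then its dual cone Q₀* equals the set of matrices of the form [F; G; V]·[F; G; V]* with F, G ν×m complex matrices, V K×m, m = 2ν+K, satisfying F·G* + G·F* = 0. -/

import Mathlib

open Matrix
open scoped ComplexOrder

/-- The Hermitian block matrix `[[0,X,0],[X,0,0],[0,0,0]]` with blocks of sizes ν, ν, K. -/
def blkQ (ν K : ℕ) (X : Matrix (Fin ν) (Fin ν) ℂ) :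
    Matrix (Fin ν ⊕ (Fin ν ⊕ Fin K)) (Fin ν ⊕ (Fin ν ⊕ Fin K)) ℂ :=
  Matrix.fromBlocks 0 (Matrix.fromCols X 0) (Matrix.fromRows X 0) 0

/-- The cone `Q₀` of Hermitian matrices `M` of size `2ν+K` such that
`M ⪰ [[0,X,0],[X,0,0],[0,0,0]]` for some Hermitian `X` (not necessarily PSD). -/
def Q0set (ν K : ℕ) : Set (Matrix (Fin ν ⊕ (Fin ν ⊕ Fin K)) (Fin ν ⊕ (Fin ν ⊕ Fin K)) ℂ) :=
  {M | M.IsHermitian ∧ ∃ X : Matrix (Fin ν) (Fin ν) ℂ, X.IsHermitian ∧ (M - blkQ ν K X).PosSemidef}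

/-- The dual cone of a set of matrices, with respect to the trace inner product
`⟨A, B⟩ = tr (A B)` on Hermitian matrices. -/
def dualSet {d : Type*} [Fintype d] (S : Set (Matrix d d ℂ)) : Set (Matrix d d ℂ) :=
  {Z | Z.IsHermitian ∧ ∀ Q ∈ S, 0 ≤ ((Q * Z).trace).re}

namespace Stmt3Aux

variable {ν K : ℕ}

/-- star of an entry of a Hermitian matrix. -/
lemma star_entry {n : Type*} {Z : Matrix n n ℂ} (hZ : Z.IsHermitian) (a b : n) :
    star (Z a b) = Z b a := by
  have := congrFun (congrFun hZ.eq b) a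
  rwa [Matrix.conjTranspose_apply] at this

/-- `Z₁₂ + Z₂₁` block combination. -/
def Wof (Z : Matrix (Fin ν ⊕ (Fin ν ⊕ Fin K)) (Fin ν ⊕ (Fin ν ⊕ Fin K)) ℂ) :
    Matrix (Fin ν) (Fin ν) ℂ :=
  Matrix.of fun i j => Z (Sum.inl i) (Sum.inr (Sum.inl j)) + Z (Sum.inr (Sum.inl i)) (Sum.inl j)

lemma blkQ_zero : blkQ ν K 0 = 0 := by
  ext a b
  rcases a with i | i | i <;> rcases b with j | j | j <;>
    simp [blkQ, fromCols_apply_inl, fromCols_apply_inr, fromRows_apply_inl, fromRows_apply_inr]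

lemma blkQ_neg (X : Matrix (Fin ν) (Fin ν) ℂ) : blkQ ν K (-X) = -(blkQ ν K X) := by
  ext a b
  rcases a with i | i | i <;> rcases b with j | j | j <;>
    simp [blkQ, fromCols_apply_inl, fromCols_apply_inr, fromRows_apply_inl, fromRows_apply_inr]

lemma blkQ_isHermitian {X : Matrix (Fin ν) (Fin ν) ℂ} (hX : X.IsHermitian) :
    (blkQ ν K X).IsHermitian := by
  ext a b
  rcases a with i | i | i <;> rcases b with j | j | j <;>
    simp [blkQ, fromCols_apply_inl, fromCols_apply_inr, fromRows_apply_inl, fromRows_apply_inr, conjTranspose_apply, hX.apply]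

lemma Wof_isHermitian {Z : Matrix (Fin ν ⊕ (Fin ν ⊕ Fin K)) (Fin ν ⊕ (Fin ν ⊕ Fin K)) ℂ}
    (hZ : Z.IsHermitian) : (Wof Z).IsHermitian := by
  ext i j
  rw [conjTranspose_apply]
  show star (Wof Z j i) = Wof Z i j
  simp only [Wof, Matrix.of_apply, star_add, star_entry hZ]
  ring

lemma trace_blkQ_mul (X : Matrix (Fin ν) (Fin ν) ℂ)
    (Z : Matrix (Fin ν ⊕ (Fin ν ⊕ Fin K)) (Fin ν ⊕ (Fin ν ⊕ Fin K)) ℂ) :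
    (blkQ ν K X * Z).trace = (X * Wof Z).trace := by
  simp only [Matrix.trace, Matrix.diag, mul_apply, Fintype.sum_sum_type, blkQ, Wof,
    fromBlocks_apply₁₁, fromBlocks_apply₁₂, fromBlocks_apply₂₁, fromBlocks_apply₂₂,
    fromCols_apply_inl, fromCols_apply_inr, fromRows_apply_inl, fromRows_apply_inr,
    Matrix.zero_apply, zero_mul, mul_zero, Finset.sum_const_zero, add_zero, zero_add,
    Matrix.of_apply, mul_add, Finset.sum_add_distrib]

lemma trace_nonneg_of_posSemidef {n : Type*} [Fintype n] [DecidableEq n]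
    {P : Matrix n n ℂ} (hP : P.PosSemidef) : 0 ≤ P.trace := by
  have h : ∀ i, 0 ≤ P i i := by
    intro i
    have := hP.dotProduct_mulVec_nonneg (Pi.single i 1)
    simpa [Matrix.mulVec, dotProduct, Pi.single_apply] using this
  exact Finset.sum_nonneg fun i _ => h i

lemma trace_vecMulVec {n : Type*} [Fintype n] (x : n → ℂ) (Z : Matrix n n ℂ) :
    (Matrix.vecMulVec x (star x) * Z).trace = star x ⬝ᵥ Z *ᵥ x := by
  simp only [Matrix.trace, Matrix.diag, mul_apply, Matrix.vecMulVec_apply, dotProduct,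
    Matrix.mulVec, Pi.star_apply, Finset.mul_sum]
  rw [Finset.sum_comm]
  exact Finset.sum_congr rfl fun b _ => Finset.sum_congr rfl fun a _ => by ring

lemma vecMulVec_posSemidef {n : Type*} [Fintype n] (x : n → ℂ) :
    (Matrix.vecMulVec x (star x)).PosSemidef := by
  refine Matrix.PosSemidef.of_dotProduct_mulVec_nonneg ?_ ?_
  · ext i j
    simp [Matrix.vecMulVec_apply, conjTranspose_apply, mul_comm]
  · intro y
    have : star y ⬝ᵥ (Matrix.vecMulVec x (star x)) *ᵥ y
        = star (star x ⬝ᵥ y) * (star x ⬝ᵥ y) := by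
      simp only [dotProduct, Matrix.mulVec, Matrix.vecMulVec_apply, Pi.star_apply,
        star_sum, star_mul', Finset.sum_mul, Finset.mul_sum, star_star]
      rw [Finset.sum_comm]
      exact Finset.sum_congr rfl fun a _ => Finset.sum_congr rfl fun b _ => by ring
    rw [this]
    exact star_mul_self_nonneg _

lemma herm_dot_star {n : Type*} [Fintype n] {Z : Matrix n n ℂ} (hZ : Z.IsHermitian) (x : n → ℂ) :
    star (star x ⬝ᵥ Z *ᵥ x) = star x ⬝ᵥ Z *ᵥ x := by
  simp only [dotProduct, Matrix.mulVec, Pi.star_apply, star_sum, star_mul',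
    Finset.mul_sum]
  rw [Finset.sum_comm]
  refine Finset.sum_congr rfl fun a _ => Finset.sum_congr rfl fun b _ => ?_
  rw [star_entry hZ, star_star]
  ring

/-- reindexing the columns of a matrix by an equivalence does not change `A * Aᴴ`. -/
lemma submatrix_mul_conjTranspose {n m : Type*} [Fintype n] [Fintype m]
    (A : Matrix n n ℂ) (e : m ≃ n) :
    (A.submatrix id e) * (A.submatrix id e)ᴴ = A * Aᴴ := by
  ext a b
  simp only [mul_apply, conjTranspose_apply, submatrix_apply, id_eq]
  exact e.sum_comp (fun c => A a c * star (A b c))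

/-- The index equivalence between `Fin (2ν+K)` and the block sum type. -/
def eNK (ν K : ℕ) : Fin (2 * ν + K) ≃ (Fin ν ⊕ (Fin ν ⊕ Fin K)) :=
  (finCongr (by omega : 2 * ν + K = ν + (ν + K))).trans
    (finSumFinEquiv.symm.trans (Equiv.sumCongr (Equiv.refl _) finSumFinEquiv.symm))

end Stmt3Aux

open Stmt3Aux

/-- Characterization of the dual cone `Q₀*`: it consists exactly of the matrices
`[F; G; V]·[F; G; V]*` with `F`, `G` of size `ν × m`, `V` of size `K × m`, `m = 2ν + K`,
and `F·G* + G·F* = 0`. -/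
theorem stmt_3 (ν K : ℕ) :
    dualSet (Q0set ν K) =
      {Y | ∃ F G : Matrix (Fin ν) (Fin (2 * ν + K)) ℂ,
        ∃ V : Matrix (Fin K) (Fin (2 * ν + K)) ℂ,
          F * Gᴴ + G * Fᴴ = 0 ∧
          Y = Matrix.fromRows F (Matrix.fromRows G V) *
            (Matrix.fromRows F (Matrix.fromRows G V))ᴴ} := by
  ext Z
  constructor
  · rintro ⟨hZ, hdual⟩
    -- Step 1: Z is PSD
    have hpsd : Z.PosSemidef := by
      refine Matrix.PosSemidef.of_dotProduct_mulVec_nonneg hZ fun x => ?_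
      have hmem : Matrix.vecMulVec x (star x) ∈ Q0set ν K := by
        refine ⟨(vecMulVec_posSemidef x).1, 0, isHermitian_zero, ?_⟩
        rw [blkQ_zero, sub_zero]
        exact vecMulVec_posSemidef x
      have h1 := hdual _ hmem
      rw [Stmt3Aux.trace_vecMulVec] at h1
      have h2 := herm_dot_star hZ x
      have him : (star x ⬝ᵥ Z *ᵥ x).im = 0 := Complex.conj_eq_iff_im.mp h2
      rw [Complex.le_def]
      exact ⟨by simpa using h1, by simpa using him.symm⟩
    -- Step 2: Wof Z = 0
    have hWh : (Wof Z).IsHermitian := Wof_isHermitian hZ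
    have key : ∀ X : Matrix (Fin ν) (Fin ν) ℂ, X.IsHermitian →
        (((X * Wof Z).trace).re = 0) := by
      intro X hX
      have hm : blkQ ν K X ∈ Q0set ν K :=
        ⟨blkQ_isHermitian hX, X, hX, by rw [sub_self]; exact Matrix.PosSemidef.zero⟩
      have hm' : blkQ ν K (-X) ∈ Q0set ν K :=
        ⟨blkQ_isHermitian hX.neg, -X, hX.neg, by rw [sub_self]; exact Matrix.PosSemidef.zero⟩
      have ha := hdual _ hm
      have hb := hdual _ hm'
      rw [trace_blkQ_mul] at ha
      rw [trace_blkQ_mul] at hb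
      have : ((-X) * Wof Z).trace = -((X * Wof Z).trace) := by
        rw [neg_mul, Matrix.trace_neg]
      rw [this] at hb
      simp only [Complex.neg_re, le_neg, neg_zero] at hb
      linarith
    have hW0 : Wof Z = 0 := by
      have h0 := key (Wof Z) hWh
      have htr : (Wof Z * Wof Z).trace
          = ((∑ i, ∑ j, Complex.normSq (Wof Z i j) : ℝ) : ℂ) := by
        push_cast
        simp only [Matrix.trace, Matrix.diag, mul_apply]
        refine Finset.sum_congr rfl fun i _ => Finset.sum_congr rfl fun j _ => ?_
        rw [show Wof Z j i = star (Wof Z i j) from (star_entry hWh i j).symm]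
        exact Complex.mul_conj _
      rw [htr] at h0
      simp only [Complex.ofReal_re] at h0
      have hz : ∀ i ∈ Finset.univ, ∀ j ∈ Finset.univ, Complex.normSq (Wof Z i j) = 0 := by
        intro i _ j _
        have h1 := (Finset.sum_eq_zero_iff_of_nonneg (fun i _ =>
          Finset.sum_nonneg fun j _ => Complex.normSq_nonneg _)).mp h0 i (Finset.mem_univ i)
        exact (Finset.sum_eq_zero_iff_of_nonneg (fun j _ => Complex.normSq_nonneg _)).mp h1 j
          (Finset.mem_univ j)
      ext i j
      exact Complex.normSq_eq_zero.mp (hz i (Finset.mem_univ i) j (Finset.mem_univ j))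
    -- Step 3: factor Z
    obtain ⟨B, hB⟩ : ∃ B : Matrix _ _ ℂ, Z = Bᴴ * B := by
        open MatrixOrder in exact CStarAlgebra.nonneg_iff_eq_star_mul_self.mp hpsd.nonneg
    set R : Matrix (Fin ν ⊕ (Fin ν ⊕ Fin K)) (Fin (2 * ν + K)) ℂ :=
      (Bᴴ).submatrix id (eNK ν K) with hR
    have hZR : Z = R * Rᴴ := by
      rw [hR, submatrix_mul_conjTranspose Bᴴ (eNK ν K), conjTranspose_conjTranspose, hB]
    set F : Matrix (Fin ν) (Fin (2 * ν + K)) ℂ := Matrix.of fun i j => R (Sum.inl i) j with hF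
    set G : Matrix (Fin ν) (Fin (2 * ν + K)) ℂ :=
      Matrix.of fun i j => R (Sum.inr (Sum.inl i)) j with hG
    set V : Matrix (Fin K) (Fin (2 * ν + K)) ℂ :=
      Matrix.of fun i j => R (Sum.inr (Sum.inr i)) j with hV
    have hRdec : Matrix.fromRows F (Matrix.fromRows G V) = R := by
      ext a j
      rcases a with i | i | i <;> simp [hF, hG, hV, fromRows_apply_inl, fromRows_apply_inr]
    refine ⟨F, G, V, ?_, ?_⟩
    · ext i j
      have e1 : (F * Gᴴ) i j = Z (Sum.inl i) (Sum.inr (Sum.inl j)) := by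
        rw [hZR]
        simp [mul_apply, conjTranspose_apply, hF, hG]
      have e2 : (G * Fᴴ) i j = Z (Sum.inr (Sum.inl i)) (Sum.inl j) := by
        rw [hZR]
        simp [mul_apply, conjTranspose_apply, hF, hG]
      have hw := congrFun (congrFun hW0 i) j
      simp only [Wof, Matrix.of_apply, Matrix.zero_apply] at hw
      simp only [Matrix.add_apply, e1, e2, Matrix.zero_apply]
      exact hw
    · rw [hRdec]
      exact hZR
  · rintro ⟨F, G, V, hFG, rfl⟩
    set R := Matrix.fromRows F (Matrix.fromRows G V) with hR
    refine ⟨Matrix.isHermitian_mul_conjTranspose_self R, ?_⟩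
    rintro Q ⟨hQ, X, hX, hP⟩
    have hWZ : Wof (R * Rᴴ) = 0 := by
      ext i j
      have e1 : (R * Rᴴ) (Sum.inl i) (Sum.inr (Sum.inl j)) = (F * Gᴴ) i j := by
        simp [mul_apply, conjTranspose_apply, hR, fromRows_apply_inl, fromRows_apply_inr]
      have e2 : (R * Rᴴ) (Sum.inr (Sum.inl i)) (Sum.inl j) = (G * Fᴴ) i j := by
        simp [mul_apply, conjTranspose_apply, hR, fromRows_apply_inl, fromRows_apply_inr]
      have hw := congrFun (congrFun hFG i) j
      simp only [Matrix.add_apply, Matrix.zero_apply] at hw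
      simp only [Wof, Matrix.of_apply, Matrix.zero_apply, e1, e2]
      exact hw
    have hsplit : Q = blkQ ν K X + (Q - blkQ ν K X) := by abel
    have htr : (Q * (R * Rᴴ)).trace
        = (blkQ ν K X * (R * Rᴴ)).trace + ((Q - blkQ ν K X) * (R * Rᴴ)).trace := by
      conv_lhs => rw [hsplit]
      rw [Matrix.add_mul, Matrix.trace_add]
    have h1 : (blkQ ν K X * (R * Rᴴ)).trace = 0 := by
      rw [trace_blkQ_mul, hWZ, Matrix.mul_zero, Matrix.trace_zero]
    have h2 : 0 ≤ ((Q - blkQ ν K X) * (R * Rᴴ)).trace := by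
      have heq : ((Q - blkQ ν K X) * (R * Rᴴ)).trace
          = (Rᴴ * (Q - blkQ ν K X) * R).trace := by
        rw [← Matrix.mul_assoc, Matrix.trace_mul_comm, ← Matrix.mul_assoc]
      rw [heq]
      exact trace_nonneg_of_posSemidef (hP.conjTranspose_mul_mul_same R)
    rw [htr, h1, zero_add]
    exact (Complex.le_def.mp h2).1
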